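/- Let a, η : ℝ → ℝ with a C¹, and let q satisfy q' = η'·a'. Define for u⁻ ≠ u⁺ the entropy cost c_η(u⁺,u⁻) := q(u⁺) − q(u⁻) − ((a(u⁺) − a(u⁻))/(u⁺ − u⁻))·(η(u⁺) − η(u⁻)). Then c_η(u⁺,u⁻) = (1/(u⁺ − u⁻)) ∫_{u⁻}^{u⁺} η'(t) ∫_{u⁻}^{u⁺} (a'(t) − a'(s)) ds dt. -/

import Mathlib

open MeasureTheory intervalIntegral

/-- Entropy cost identity: with `q' = η'·a'` and `u⁻ < u⁺`,
`c_η(u⁺,u⁻) = (1/(u⁺−u⁻)) ∫_{u⁻}^{u⁺} η'(t) ∫_{u⁻}^{u⁺} (a'(t)−a'(s)) ds dt`. -/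
theorem stmt2 (a η q : ℝ → ℝ) (ha : ContDiff ℝ 1 a) (hη : ContDiff ℝ 1 η)
    (hq : ∀ v, HasDerivAt q (deriv η v * deriv a v) v)
    (um up : ℝ) (h : um < up) :
    q up - q um - ((a up - a um) / (up - um)) * (η up - η um)
      = (1 / (up - um)) *
        ∫ t in um..up, deriv η t * ∫ s in um..up, (deriv a t - deriv a s) := by
  have hne : up - um ≠ 0 := sub_ne_zero.mpr h.ne'
  have hac : Continuous (deriv a) := ha.continuous_deriv le_rfl
  have hηc : Continuous (deriv η) := hη.continuous_deriv le_rfl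
  have haeq : (∫ t in um..up, deriv a t) = a up - a um :=
    integral_deriv_eq_sub (fun x _ => ha.differentiable one_ne_zero x)
      (hac.intervalIntegrable _ _)
  have hηeq : (∫ t in um..up, deriv η t) = η up - η um :=
    integral_deriv_eq_sub (fun x _ => hη.differentiable one_ne_zero x)
      (hηc.intervalIntegrable _ _)
  have hqeq : (∫ t in um..up, deriv η t * deriv a t) = q up - q um :=
    integral_eq_sub_of_hasDerivAt (fun t _ => hq t)
      ((hηc.mul hac).intervalIntegrable _ _)
  have hinner : ∀ t, (∫ s in um..up, (deriv a t - deriv a s))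
      = (up - um) * deriv a t - (a up - a um) := by
    intro t
    rw [intervalIntegral.integral_sub intervalIntegrable_const
      (hac.intervalIntegrable _ _), intervalIntegral.integral_const, haeq,
      smul_eq_mul]
  have hout : (∫ t in um..up, deriv η t * ∫ s in um..up, (deriv a t - deriv a s))
      = (up - um) * (∫ t in um..up, deriv η t * deriv a t)
        - (a up - a um) * (∫ t in um..up, deriv η t) := by
    have : ∀ t, deriv η t * (∫ s in um..up, (deriv a t - deriv a s))
        = (up - um) * (deriv η t * deriv a t) - (a up - a um) * deriv η t := by
      intro t; rw [hinner t]; ring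
    rw [intervalIntegral.integral_congr (fun t _ => this t),
      intervalIntegral.integral_sub (f := fun t => (up - um) * (deriv η t * deriv a t))
          (g := fun t => (a up - a um) * deriv η t)
        ((continuous_const.mul (hηc.mul hac)).intervalIntegrable _ _)
        ((continuous_const.mul hηc).intervalIntegrable _ _),
      intervalIntegral.integral_const_mul, intervalIntegral.integral_const_mul]
  rw [hout, hqeq, hηeq]
  field_simp
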